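/- For integers p, q ≥ 0 and any rational x, with k_{r,s}(x) := (-1)^{s-r} · C(x+s, s-r) · C(2r, r) / C(s+r, r) and λ_h(x) := ((-1)^{h-1}/2) · C(x+h-1, h-1) · C(x, h-1) / C(2h-3, h-2)^2 for h ≥ 2, the following addition formula holds: (-1)^{p+q} C(x+p+q, p+q) = k_{0,p}(x)·k_{0,q}(x) + Σ_{i=1}^{max(p,q)} λ_{i+1}(x) · k_{i,p}(x) · k_{i,q}(x). -/

import Mathlib

/-- Generalized binomial coefficient `C(x, k) = x(x-1)⋯(x-k+1)/k!` for rational `x`. -/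
noncomputable def gchoose (x : ℚ) (k : ℕ) : ℚ :=
  (∏ i ∈ Finset.range k, (x - i)) / (Nat.factorial k)

/-- `k_{r,s}(x) = (-1)^{s-r} C(x+s, s-r) C(2r, r) / C(s+r, r)`, vanishing when `s < r`. -/
noncomputable def kfun (x : ℚ) (r s : ℕ) : ℚ :=
  if r ≤ s then
    (-1 : ℚ) ^ (s - r) * gchoose (x + s) (s - r) * (Nat.choose (2 * r) r : ℚ) /
      gchoose ((s : ℚ) + r) r
  else 0

/-- The `h`-th modulus `λ_h(x) = ((-1)^{h-1}/2) C(x+h-1, h-1) C(x, h-1) / C(2h-3, h-2)^2`. -/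
noncomputable def lam (x : ℚ) (h : ℕ) : ℚ :=
  ((-1 : ℚ) ^ (h - 1) / 2) * gchoose (x + h - 1) (h - 1) * gchoose x (h - 1) /
    (gchoose (2 * (h : ℚ) - 3) (h - 2)) ^ 2

lemma gchoose_zero (x : ℚ) : gchoose x 0 = 1 := by simp [gchoose]

lemma gchoose_succ (x : ℚ) (k : ℕ) :
    gchoose x (k + 1) = gchoose x k * (x - k) / (k + 1) := by
  rw [gchoose, gchoose, Finset.prod_range_succ, Nat.factorial_succ]
  push_cast
  rw [div_mul_eq_mul_div, div_div, mul_comm ((k:ℚ)+1)]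

lemma gchoose_one (x : ℚ) : gchoose x 1 = x := by
  rw [show (1:ℕ) = 0 + 1 from rfl, gchoose_succ, gchoose_zero]
  norm_num

lemma gchoose_succ_left (x : ℚ) (k : ℕ) :
    gchoose (x + 1) (k + 1) = gchoose x k * (x + 1) / (k + 1) := by
  rw [gchoose, gchoose, Finset.prod_range_succ', Nat.factorial_succ]
  have : ∀ i ∈ Finset.range k, x + 1 - (((i+1 : ℕ)):ℚ) = x - i := by
    intro i _; push_cast; ring
  rw [Finset.prod_congr rfl this]
  push_cast
  rw [div_mul_eq_mul_div, div_div, mul_comm ((k:ℚ)+1)]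
  norm_num

lemma gchoose_natCast (n k : ℕ) : gchoose (n : ℚ) k = (n.choose k : ℚ) := by
  induction k with
  | zero => simp [gchoose_zero]
  | succ m ih =>
    rw [gchoose_succ, ih]
    rcases le_or_gt m n with h | h
    · have hc := Nat.choose_succ_right_eq n m
      have hq : ((n.choose (m+1) : ℚ)) * (m+1) = (n.choose m : ℚ) * ((n:ℚ) - m) := by
        have := congrArg (Nat.cast : ℕ → ℚ) hc
        push_cast [Nat.cast_sub h] at this
        linarith [this]
      have h3 : ((m:ℚ) + 1) ≠ 0 := by positivity
      field_simp
      linarith [hq]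
    · have h1 : n.choose (m+1) = 0 := Nat.choose_eq_zero_of_lt (by omega)
      rcases Nat.lt_or_ge n m with h2 | h2
      · have : n.choose m = 0 := Nat.choose_eq_zero_of_lt h2
        simp [h1, this]
      · have : n = m := by omega
        subst this
        simp [h1]

lemma kfun_eq (x : ℚ) (r t : ℕ) :
    kfun x r (r + t) = (-1 : ℚ) ^ t * gchoose (x + ((r : ℚ) + t)) t *
      (Nat.choose (2 * r) r : ℚ) / (Nat.choose (r + t + r) r : ℚ) := by
  rw [kfun, if_pos (Nat.le_add_right r t), Nat.add_sub_cancel_left]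
  rw [show ((r + t : ℕ) : ℚ) + r = ((r + t + r : ℕ) : ℚ) by push_cast; ring,
    gchoose_natCast]
  norm_num [Nat.cast_add]

lemma kfun_of_lt (x : ℚ) {r s : ℕ} (h : s < r) : kfun x r s = 0 := by
  rw [kfun, if_neg (by omega)]

lemma kfun_diag (x : ℚ) (r : ℕ) : kfun x r r = 1 := by
  have := kfun_eq x r 0
  simp only [Nat.add_zero] at this
  rw [this, gchoose_zero]
  have h : (Nat.choose (2*r) r : ℚ) ≠ 0 := by
    exact_mod_cast (Nat.choose_pos (by omega)).ne'
  rw [show r + r = 2 * r by omega]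
  field_simp

noncomputable def bb (x : ℚ) (i : ℕ) : ℚ := (x - 2*(i:ℚ)^2 + 1) / (4*(i:ℚ)^2 - 1)

noncomputable def cc (x : ℚ) (i : ℕ) : ℚ :=
  if i = 0 then -(x*(x+1))/2 else -((x - i)*(x + i + 1)) / (4*(2*(i:ℚ)+1)^2)

noncomputable def ww (x : ℚ) (i : ℕ) : ℚ := if i = 0 then 1 else lam x (i+1)

lemma choose_ne (n k : ℕ) (h : k ≤ n) : ((n.choose k : ℚ)) ≠ 0 := by
  exact_mod_cast (Nat.choose_pos h).ne'

/-- recurrence, case i = 0, s = 0 -/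
lemma rec_zero_zero (x : ℚ) :
    kfun x 0 1 = bb x 0 * kfun x 0 0 + cc x 0 * kfun x 1 0 := by
  rw [kfun_of_lt x (by norm_num : (0:ℕ) < 1), kfun_diag]
  have h1 := kfun_eq x 0 1
  simp only [Nat.zero_add] at h1
  rw [h1, bb]
  push_cast
  rw [gchoose_one]
  norm_num
  field_simp
  ring

/-- recurrence, case i = 0, s ≥ 1 -/
lemma rec_zero_succ (x : ℚ) (t : ℕ) :
    kfun x 0 (t + 2) = bb x 0 * kfun x 0 (t + 1) + cc x 0 * kfun x 1 (t + 1) := by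
  have e1 : kfun x 0 (t+2) = (-1:ℚ)^(t+2) * gchoose (x + ((0:ℚ) + (t+2:ℕ))) (t+2) *
      (Nat.choose 0 0 : ℚ) / (Nat.choose (0+(t+2)+0) 0 : ℚ) := by
    have := kfun_eq x 0 (t+2); simpa using this
  have e2 : kfun x 0 (t+1) = (-1:ℚ)^(t+1) * gchoose (x + ((0:ℚ) + (t+1:ℕ))) (t+1) *
      (Nat.choose 0 0 : ℚ) / (Nat.choose (0+(t+1)+0) 0 : ℚ) := by
    have := kfun_eq x 0 (t+1); simpa using this
  have e3 := kfun_eq x 1 t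
  rw [show (1:ℕ) + t = t + 1 by omega] at e3
  rw [e1, e2, e3, bb, cc, if_pos rfl]
  simp only [Nat.choose_zero_right, Nat.choose_self]
  have hch : ((t+1+1).choose 1 : ℚ) = (t+2 : ℚ) := by
    rw [Nat.choose_one_right]; push_cast; ring
  rw [hch]
  -- gchoose reductions to P := gchoose (x + (t+1:ℚ)) t
  have g2 : gchoose (x + ((0:ℚ) + ((t+1:ℕ):ℚ))) (t+1)
      = gchoose (x + ((1:ℚ) + (t:ℚ))) t * (x + 1) / (t+1) := by
    rw [gchoose_succ, show x + ((0:ℚ) + ((t+1:ℕ):ℚ)) = x + ((1:ℚ) + (t:ℚ)) by push_cast; ring,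
      show x + ((1:ℚ) + (t:ℚ)) - (t:ℚ) = x + 1 by ring]
  have g1 : gchoose (x + ((0:ℚ) + ((t+2:ℕ):ℚ))) (t+2)
      = gchoose (x + ((1:ℚ) + (t:ℚ))) t * (x + 1) * (x + ((t:ℚ)+2)) / ((t+1)*(t+2)) := by
    rw [show x + ((0:ℚ) + ((t+2:ℕ):ℚ)) = (x + ((1:ℚ) + (t:ℚ))) + 1 by push_cast; ring,
      gchoose_succ_left, gchoose_succ]
    push_cast
    have h1 : ((t:ℚ)+1) ≠ 0 := by positivity
    have h2 : ((t:ℚ)+2) ≠ 0 := by positivity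
    field_simp
    ring
  rw [g1, g2]
  have h1 : ((t:ℚ)+1) ≠ 0 := by positivity
  have h2 : ((t:ℚ)+2) ≠ 0 := by positivity
  simp only [pow_succ, Nat.choose_one_right]
  push_cast
  field_simp
  ring

lemma central_cast (r : ℕ) :
    ((2*r+2).choose (r+1) : ℚ) * (r+1) = 2 * (2*r+1) * ((2*r).choose r : ℚ) := by
  have h := Nat.succ_mul_centralBinom_succ r
  have h2 : (r+1) * ((2*(r+1)).choose (r+1)) = 2 * (2*r+1) * ((2*r).choose r) := h
  rw [show 2*(r+1) = 2*r+2 by omega] at h2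
  exact_mod_cast by linarith [congrArg (Nat.cast (R := ℚ)) h2] 

lemma shift_cast (n k : ℕ) (h : k ≤ n) :
    ((n+1).choose k : ℚ) * ((n : ℚ) + 1 - k) = (n.choose k : ℚ) * ((n:ℚ)+1) := by
  have h2 := Nat.choose_mul_succ_eq n k
  have h3 : ((n+1).choose k : ℚ) * (((n+1-k : ℕ)):ℚ) = (n.choose k:ℚ) * ((n:ℚ)+1) := by
    exact_mod_cast by linarith [congrArg (Nat.cast (R := ℚ)) h2]
  rw [Nat.cast_sub (by omega)] at h3
  push_cast at h3 ⊢
  linarith [h3]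

lemma succ_succ_cast (n k : ℕ) :
    ((n+1).choose (k+1) : ℚ) * (k+1) = ((n:ℚ)+1) * (n.choose k : ℚ) := by
  have h2 := Nat.add_one_mul_choose_eq n k
  exact_mod_cast by linarith [congrArg (Nat.cast (R := ℚ)) h2]

/-- recurrence, boundary case s = i, i = r+1 -/
lemma rec_bd (x : ℚ) (r : ℕ) :
    kfun x (r+1) (r+2) = kfun x r (r+1) + bb x (r+1) * kfun x (r+1) (r+1)
      + cc x (r+1) * kfun x (r+2) (r+1) := by
  rw [kfun_of_lt x (by omega : r+1 < r+2), kfun_diag, mul_zero, add_zero, mul_one]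
  rw [show r+2 = (r+1)+1 by omega, kfun_eq x (r+1) 1,
    show r+1 = r+1 by rfl]
  rw [show r + 1 = r + 1 from rfl]
  have e2 := kfun_eq x r 1
  rw [e2]
  rw [show r+1+1+(r+1) = 2*r+3 by omega, show r+1+r = 2*r+1 by omega,
    show 2*(r+1) = 2*r+2 by omega]
  have hr1 : ((r:ℚ)+1) ≠ 0 := by positivity
  have hr2 : ((r:ℚ)+2) ≠ 0 := by positivity
  have ho1 : ((2*r+1 : ℕ):ℚ) ≠ 0 := by positivity
  have hc2 : ((2*r).choose r : ℚ) ≠ 0 := choose_ne _ _ (by omega)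
  have c1 : ((2*r+1).choose r : ℚ) = ((2*r).choose r : ℚ) * (2*(r:ℚ)+1)/((r:ℚ)+1) := by
    have := shift_cast (2*r) r (by omega)
    push_cast at this ⊢
    field_simp
    linarith [this]
  have c2 : ((2*r+2).choose (r+1) : ℚ) = ((2*r).choose r : ℚ) * 2*(2*(r:ℚ)+1)/((r:ℚ)+1) := by
    have := central_cast r
    push_cast at this ⊢
    field_simp
    linarith [this]
  have c3 : ((2*r+3).choose (r+1) : ℚ)
      = ((2*r).choose r : ℚ) * 2*(2*(r:ℚ)+1)*(2*(r:ℚ)+3)/(((r:ℚ)+1)*((r:ℚ)+2)) := by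
    have h := shift_cast (2*r+2) (r+1) (by omega)
    rw [show 2*r+2+1 = 2*r+3 by omega] at h
    rw [c2] at h
    push_cast at h ⊢
    have h23 : (2*(r:ℚ)+3) ≠ 0 := by positivity
    field_simp at h ⊢
    nlinarith [h]
  have h21 : (2*(r:ℚ)+1) ≠ 0 := by positivity
  have h23 : (2*(r:ℚ)+3) ≠ 0 := by positivity
  have hbb : bb x (r+1) = (x - 2*((r:ℚ)+1)^2 + 1)/((2*(r:ℚ)+1)*(2*(r:ℚ)+3)) := by
    rw [bb]
    push_cast
    rw [show 4*((r:ℚ)+1)^2 - 1 = (2*(r:ℚ)+1)*(2*(r:ℚ)+3) by ring]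
  rw [c1, c2, c3, hbb]
  simp only [gchoose_one]
  push_cast
  field_simp
  ring

set_option maxHeartbeats 2000000 in
/-- recurrence, generic case s ≥ i+1, i = r+1 -/
lemma rec_gen (x : ℚ) (r u : ℕ) :
    kfun x (r+1) (r+u+3) = kfun x r (r+u+2) + bb x (r+1) * kfun x (r+1) (r+u+2)
      + cc x (r+1) * kfun x (r+2) (r+u+2) := by
  have e1 : kfun x (r+1) (r+u+3) = kfun x (r+1) ((r+1)+(u+2)) := by
    rw [show r+u+3 = (r+1)+(u+2) by omega]
  have e2 : kfun x r (r+u+2) = kfun x r (r+(u+2)) := by rw [show r+u+2 = r+(u+2) by omega]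
  have e3 : kfun x (r+1) (r+u+2) = kfun x (r+1) ((r+1)+(u+1)) := by
    rw [show r+u+2 = (r+1)+(u+1) by omega]
  have e4 : kfun x (r+2) (r+u+2) = kfun x (r+2) ((r+2)+u) := by
    rw [show r+u+2 = (r+2)+u by omega]
  rw [e1, e2, e3, e4, kfun_eq, kfun_eq, kfun_eq, kfun_eq]
  rw [show (r+1)+(u+2)+(r+1) = 2*r+u+4 by omega,
      show r+(u+2)+r = 2*r+u+2 by omega,
      show (r+1)+(u+1)+(r+1) = 2*r+u+3 by omega,
      show (r+2)+u+(r+2) = 2*r+u+4 by omega,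
      show 2*(r+1) = 2*r+2 by omega,
      show 2*(r+2) = 2*r+4 by omega]
  -- nonzero facts
  have hr1 : ((r:ℚ)+1) ≠ 0 := by positivity
  have hr2 : ((r:ℚ)+2) ≠ 0 := by positivity
  have hu1 : ((u:ℚ)+1) ≠ 0 := by positivity
  have hu2 : ((u:ℚ)+2) ≠ 0 := by positivity
  have hru3 : ((r:ℚ)+(u:ℚ)+3) ≠ 0 := by positivity
  have h21 : (2*(r:ℚ)+1) ≠ 0 := by positivity
  have h23 : (2*(r:ℚ)+3) ≠ 0 := by positivity
  have hC : ((2*r).choose r : ℚ) ≠ 0 := choose_ne _ _ (by omega)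
  have hD3 : ((2*r+u+2).choose r : ℚ) ≠ 0 := choose_ne _ _ (by omega)
  -- choose relations
  have hD1 : ((2*r+u+3).choose (r+1) : ℚ)
      = ((2*r+u+2).choose r : ℚ) * (2*(r:ℚ)+(u:ℚ)+3)/((r:ℚ)+1) := by
    have h := succ_succ_cast (2*r+u+2) r
    rw [show 2*r+u+2+1 = 2*r+u+3 by omega] at h
    push_cast at h ⊢
    field_simp
    linarith [h]
  have hD2 : ((2*r+u+4).choose (r+1) : ℚ)
      = ((2*r+u+2).choose r : ℚ) * (2*(r:ℚ)+(u:ℚ)+3)*(2*(r:ℚ)+(u:ℚ)+4)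
        /(((r:ℚ)+1)*((r:ℚ)+(u:ℚ)+3)) := by
    have h := shift_cast (2*r+u+3) (r+1) (by omega)
    rw [show 2*r+u+3+1 = 2*r+u+4 by omega, hD1] at h
    push_cast at h ⊢
    have h5 : ((2*r+u+3 : ℕ):ℚ) + 1 - ((r:ℚ)+1) = (r:ℚ)+(u:ℚ)+3 := by push_cast; ring
    field_simp at h ⊢
    nlinarith [h]
  have hD4 : ((2*r+u+4).choose (r+2) : ℚ)
      = ((2*r+u+2).choose r : ℚ) * (2*(r:ℚ)+(u:ℚ)+3)*(2*(r:ℚ)+(u:ℚ)+4)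
        /(((r:ℚ)+1)*((r:ℚ)+2)) := by
    have h := succ_succ_cast (2*r+u+3) (r+1)
    rw [show 2*r+u+3+1 = 2*r+u+4 by omega, hD1] at h
    push_cast at h ⊢
    field_simp at h ⊢
    nlinarith [h]
  have hN1 : ((2*r+2).choose (r+1) : ℚ) = ((2*r).choose r : ℚ) * 2*(2*(r:ℚ)+1)/((r:ℚ)+1) := by
    have := central_cast r
    push_cast at this ⊢
    field_simp
    linarith [this]
  have hN2 : ((2*r+4).choose (r+2) : ℚ)
      = ((2*r).choose r : ℚ) * 4*(2*(r:ℚ)+1)*(2*(r:ℚ)+3)/(((r:ℚ)+1)*((r:ℚ)+2)) := by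
    have h := central_cast (r+1)
    rw [show 2*(r+1)+2 = 2*r+4 by omega, show r+1+1 = r+2 by omega,
      show 2*(r+1) = 2*r+2 by omega, hN1] at h
    push_cast at h ⊢
    field_simp at h ⊢
    nlinarith [h]
  -- gchoose relations
  have a1 : x + (((r+1 : ℕ)):ℚ) + ((u+2 : ℕ):ℚ) = (x + ((r:ℚ)+(u:ℚ)+2)) + 1 := by
    push_cast; ring
  have a2 : x + ((r:ℚ) + ((u+2 : ℕ):ℚ)) = x + ((r:ℚ)+(u:ℚ)+2) := by push_cast; ring
  have a3 : x + (((r+1 : ℕ):ℚ) + ((u+1 : ℕ):ℚ)) = x + ((r:ℚ)+(u:ℚ)+2) := by push_cast; ring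
  have a4 : x + (((r+2 : ℕ):ℚ) + ((u : ℕ):ℚ)) = x + ((r:ℚ)+(u:ℚ)+2) := by push_cast; ring
  have a1' : x + (((r+1 : ℕ):ℚ) + ((u+2 : ℕ):ℚ)) = (x + ((r:ℚ)+(u:ℚ)+2)) + 1 := by
    push_cast; ring
  set A := x + ((r:ℚ)+(u:ℚ)+2) with hA
  set P := gchoose A u with hP
  have hg3 : gchoose A (u+1) = P * (x + (r:ℚ) + 2)/((u:ℚ)+1) := by
    rw [hP, gchoose_succ, show A - (u:ℚ) = x + (r:ℚ) + 2 by rw [hA]; ring]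
  have hg2 : gchoose A (u+2) = P * (x+(r:ℚ)+2)*(x+(r:ℚ)+1)/(((u:ℚ)+1)*((u:ℚ)+2)) := by
    rw [show u+2 = (u+1)+1 from rfl, gchoose_succ, hg3,
      show A - ((u+1:ℕ):ℚ) = x + (r:ℚ) + 1 by rw [hA]; push_cast; ring,
      show ((u+1:ℕ):ℚ)+1 = (u:ℚ)+2 by push_cast; ring,
      div_mul_eq_mul_div, div_div]
  have hg1 : gchoose (A+1) (u+2) = P * (x+(r:ℚ)+2)*(A+1)/(((u:ℚ)+1)*((u:ℚ)+2)) := by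
    rw [show u+2 = (u+1)+1 from rfl, gchoose_succ_left, hg3,
      show ((u+1:ℕ):ℚ)+1 = (u:ℚ)+2 by push_cast; ring,
      div_mul_eq_mul_div, div_div]
  have hbb : bb x (r+1) = (x - 2*((r:ℚ)+1)^2 + 1)/((2*(r:ℚ)+1)*(2*(r:ℚ)+3)) := by
    rw [bb]
    push_cast
    rw [show 4*((r:ℚ)+1)^2 - 1 = (2*(r:ℚ)+1)*(2*(r:ℚ)+3) by ring]
  have hcc : cc x (r+1) = -((x - ((r:ℚ)+1))*(x + (r:ℚ) + 2))/(4*(2*(r:ℚ)+3)^2) := by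
    rw [cc, if_neg (by omega : r+1 ≠ 0)]
    push_cast
    ring_nf
  rw [a1', a2, a3, a4, hg1, hg2, hg3, hD1, hD2, hD4, hN1, hN2, hbb, hcc]
  simp only [pow_succ]
  field_simp
  ring

lemma choose1 (r : ℕ) :
    ((2*r+1).choose r : ℚ) = ((2*r).choose r : ℚ) * (2*(r:ℚ)+1)/((r:ℚ)+1) := by
  have hr1 : ((r:ℚ)+1) ≠ 0 := by positivity
  have := shift_cast (2*r) r (by omega)
  push_cast at this ⊢
  field_simp
  linarith [this]

lemma choose3 (r : ℕ) :
    ((2*r+3).choose (r+1) : ℚ)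
      = ((2*r).choose r : ℚ) * 2*(2*(r:ℚ)+1)*(2*(r:ℚ)+3)/(((r:ℚ)+1)*((r:ℚ)+2)) := by
  have hr1 : ((r:ℚ)+1) ≠ 0 := by positivity
  have hr2 : ((r:ℚ)+2) ≠ 0 := by positivity
  have h23 : (2*(r:ℚ)+3) ≠ 0 := by positivity
  have hc2 : ((2*r+2).choose (r+1) : ℚ) = ((2*r).choose r : ℚ) * 2*(2*(r:ℚ)+1)/((r:ℚ)+1) := by
    have := central_cast r
    push_cast at this ⊢
    field_simp
    linarith [this]
  have h := shift_cast (2*r+2) (r+1) (by omega)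
  rw [show 2*r+2+1 = 2*r+3 by omega, hc2] at h
  push_cast at h ⊢
  field_simp at h ⊢
  nlinarith [h]

/-- the full recurrence -/
lemma rec_all (x : ℚ) (i s : ℕ) :
    kfun x i (s+1) = (if i = 0 then 0 else kfun x (i-1) s)
      + bb x i * kfun x i s + cc x i * kfun x (i+1) s := by
  match i with
  | 0 =>
    rw [if_pos rfl, zero_add]
    match s with
    | 0 => exact rec_zero_zero x
    | t+1 => exact rec_zero_succ x t
  | r+1 =>
    rw [if_neg (by omega : ¬ r + 1 = 0), Nat.add_sub_cancel]
    rcases Nat.lt_or_ge s r with h | h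
    · rw [kfun_of_lt x (by omega : s + 1 < r + 1), kfun_of_lt x (by omega : s < r),
        kfun_of_lt x (by omega : s < r + 1), kfun_of_lt x (by omega : s < r + 2)]
      ring
    · rcases Nat.lt_or_ge s (r+1) with h2 | h2
      · have hs : s = r := by omega
        subst hs
        rw [kfun_diag, kfun_diag, kfun_of_lt x (by omega : s < s + 1),
          kfun_of_lt x (by omega : s < s + 2)]
        ring
      · rcases Nat.lt_or_ge s (r+2) with h3 | h3
        · have hs : s = r + 1 := by omega
          subst hs
          exact rec_bd x r
        · obtain ⟨u, rfl⟩ : ∃ u, s = r + u + 2 := ⟨s - r - 2, by omega⟩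
          have := rec_gen x r u
          rw [show r+u+3 = r+u+2+1 by omega] at this
          exact this

lemma lam_two (x : ℚ) : lam x 2 = -(x*(x+1))/2 := by
  rw [lam]
  norm_num [gchoose_zero, show x + 2 - 1 = x + 1 by ring, gchoose_one]
  ring

lemma lam_succ (x : ℚ) (r : ℕ) : lam x (r+3) = lam x (r+2) * cc x (r+1) := by
  rw [lam, lam, cc, if_neg (by omega : ¬ r+1 = 0)]
  rw [show r+3-1 = r+2 by omega, show r+3-2 = r+1 by omega,
    show r+2-1 = r+1 by omega, show r+2-2 = r by omega]
  rw [show 2*((r+3:ℕ):ℚ) - 3 = ((2*r+3 : ℕ):ℚ) by push_cast; ring,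
    show 2*((r+2:ℕ):ℚ) - 3 = ((2*r+1 : ℕ):ℚ) by push_cast; ring,
    gchoose_natCast, gchoose_natCast, choose1, choose3]
  rw [show x + ((r+3:ℕ):ℚ) - 1 = (x + ((r:ℚ)+1)) + 1 by push_cast; ring,
    show r+2 = (r+1)+1 from rfl, gchoose_succ_left (x + ((r:ℚ)+1)) (r+1),
    gchoose_succ x (r+1),
    show x + ((r+2:ℕ):ℚ) - 1 = x + ((r:ℚ)+1) by push_cast; ring]
  have hr1 : ((r:ℚ)+1) ≠ 0 := by positivity
  have hr2 : ((r:ℚ)+2) ≠ 0 := by positivity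
  have h21 : (2*(r:ℚ)+1) ≠ 0 := by positivity
  have h23 : (2*(r:ℚ)+3) ≠ 0 := by positivity
  have hC : ((2*r).choose r : ℚ) ≠ 0 := choose_ne _ _ (by omega)
  simp only [pow_succ]
  push_cast
  field_simp
  ring

noncomputable def wws (x : ℚ) (i : ℕ) : ℚ := if i = 0 then 1 else lam x (i+1)

lemma wws_succ (x : ℚ) (i : ℕ) : wws x (i+1) = wws x i * cc x i := by
  match i with
  | 0 =>
    rw [wws, wws, if_pos rfl, if_neg (by omega : ¬ (0:ℕ)+1 = 0), cc, if_pos rfl, lam_two]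
    ring
  | r+1 =>
    rw [wws, wws, if_neg (by omega : ¬ r+1+1 = 0), if_neg (by omega : ¬ r+1 = 0)]
    exact lam_succ x r

lemma sum_step (x : ℚ) (p q n : ℕ) (hp : p ≤ n) :
    ∑ i ∈ Finset.range (n+1), wws x i * kfun x i (p+1) * kfun x i q
      = ∑ i ∈ Finset.range (n+1), wws x i * bb x i * kfun x i p * kfun x i q
        + ∑ i ∈ Finset.range n,
            wws x (i+1) * (kfun x i p * kfun x (i+1) q + kfun x (i+1) p * kfun x i q) := by
  have expand : ∀ i ∈ Finset.range (n+1), wws x i * kfun x i (p+1) * kfun x i q =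
      (wws x i * (if i = 0 then 0 else kfun x (i-1) p) * kfun x i q
        + wws x i * cc x i * kfun x (i+1) p * kfun x i q)
      + wws x i * bb x i * kfun x i p * kfun x i q := by
    intro i _
    rw [rec_all]
    ring
  rw [Finset.sum_congr rfl expand, Finset.sum_add_distrib, Finset.sum_add_distrib]
  have hT1 : ∑ i ∈ Finset.range (n+1), wws x i * (if i = 0 then 0 else kfun x (i-1) p) * kfun x i q
      = ∑ i ∈ Finset.range n, wws x (i+1) * kfun x i p * kfun x (i+1) q := by
    rw [Finset.sum_range_succ']
    simp [Nat.add_sub_cancel]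
  have hT3 : ∑ i ∈ Finset.range (n+1), wws x i * cc x i * kfun x (i+1) p * kfun x i q
      = ∑ i ∈ Finset.range n, wws x (i+1) * kfun x (i+1) p * kfun x i q := by
    have step : ∀ i ∈ Finset.range (n+1), wws x i * cc x i * kfun x (i+1) p * kfun x i q
        = wws x (i+1) * kfun x (i+1) p * kfun x i q := by
      intro i _
      rw [wws_succ]
    rw [Finset.sum_congr rfl step, Finset.sum_range_succ,
      kfun_of_lt x (by omega : p < n + 1), mul_zero, zero_mul, add_zero]
  rw [hT1, hT3, ← Finset.sum_add_distrib, add_comm]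
  congr 1
  apply Finset.sum_congr rfl
  intro i _
  ring

lemma swap_step (x : ℚ) (p q n : ℕ) (hp : p ≤ n) (hq : q ≤ n) :
    ∑ i ∈ Finset.range (n+1), wws x i * kfun x i (p+1) * kfun x i q
      = ∑ i ∈ Finset.range (n+1), wws x i * kfun x i p * kfun x i (q+1) := by
  have h2 : ∑ i ∈ Finset.range (n+1), wws x i * kfun x i p * kfun x i (q+1)
      = ∑ i ∈ Finset.range (n+1), wws x i * kfun x i (q+1) * kfun x i p := by
    apply Finset.sum_congr rfl; intro i _; ring
  rw [sum_step x p q n hp, h2, sum_step x q p n hq]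
  congr 1
  · apply Finset.sum_congr rfl; intro i _; ring
  · apply Finset.sum_congr rfl; intro i _; ring

lemma sum_q_zero (x : ℚ) (p n : ℕ) :
    ∑ i ∈ Finset.range (n+1), wws x i * kfun x i p * kfun x i 0 = kfun x 0 p := by
  rw [Finset.sum_eq_single_of_mem 0 (Finset.mem_range.mpr (by omega))]
  · rw [kfun_diag, wws, if_pos rfl]
    ring
  · intro i _ hi
    rw [kfun_of_lt x (by omega : 0 < i)]
    ring

lemma main_sum (x : ℚ) : ∀ q p : ℕ,
    ∑ i ∈ Finset.range (p+q+1), wws x i * kfun x i p * kfun x i q = kfun x 0 (p+q) := by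
  intro q
  induction q with
  | zero => intro p; exact sum_q_zero x p p
  | succ q ih =>
    intro p
    have e : p + (q+1) + 1 = (p+q+1) + 1 := by omega
    rw [e, ← swap_step x p q (p+q+1) (by omega) (by omega)]
    have e2 : (p+q+1) + 1 = (p+1) + q + 1 := by omega
    rw [e2, ih (p+1), show p+1+q = p+(q+1) by omega]

theorem stmt5 (p q : ℕ) (x : ℚ) :
    (-1 : ℚ) ^ (p + q) * gchoose (x + p + q) (p + q) =
      kfun x 0 p * kfun x 0 q +
        ∑ i ∈ Finset.Icc 1 (max p q), lam x (i + 1) * kfun x i p * kfun x i q := by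
  have hk0 : kfun x 0 (p+q) = (-1 : ℚ) ^ (p + q) * gchoose (x + p + q) (p + q) := by
    have := kfun_eq x 0 (p+q)
    rw [Nat.zero_add] at this
    rw [this]
    simp only [Nat.mul_zero, Nat.choose_zero_right, Nat.choose_self]
    rw [show x + (((0:ℕ):ℚ) + ((p+q : ℕ):ℚ)) = x + p + q by push_cast; ring]
    norm_num
  have h1 : ∑ i ∈ Finset.range (max p q + 1), wws x i * kfun x i p * kfun x i q
      = kfun x 0 p * kfun x 0 q
        + ∑ i ∈ Finset.Icc 1 (max p q), lam x (i + 1) * kfun x i p * kfun x i q := by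
    rw [show Finset.range (max p q + 1) = insert 0 (Finset.Icc 1 (max p q)) by
      ext i
      simp only [Finset.mem_range, Finset.mem_insert, Finset.mem_Icc]
      omega]
    rw [Finset.sum_insert (by simp)]
    congr 1
    · rw [wws, if_pos rfl, one_mul]
    · apply Finset.sum_congr rfl
      intro i hi
      rw [wws, if_neg (by simp only [Finset.mem_Icc] at hi; omega)]
  have h2 : ∑ i ∈ Finset.range (max p q + 1), wws x i * kfun x i p * kfun x i q
      = ∑ i ∈ Finset.range (p + q + 1), wws x i * kfun x i p * kfun x i q := by
    apply Finset.sum_subset (Finset.range_subset_range.mpr (by omega))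
    intro i hi hni
    simp only [Finset.mem_range] at hi hni
    rw [kfun_of_lt x (show p < i by omega)]
    ring
  rw [← h1, h2, main_sum, hk0]
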